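/- arXiv:1007.0687 — 3 statements merged into one kernel-verified Lean document; each statement's English description precedes it below -/
import Mathlib

section
/- Let $\rho$ be a measure on $(0,\infty)$ for which $\mathfrak{A}(\rho)$ is definable. Then for every $\alpha > -1$ and $b>0$, there is a constant $C_1$ (depending only on $\alpha, b$, not on $\rho$) such that $\int_{(b,\infty)} u^{\alpha}\,\mathfrak{A}(\rho)(du) \le C_1 \int_{(b,\infty)} s^{\alpha + 1/2}\,\rho(ds)$. -/
open MeasureTheory Real Set ENNReal

/-- Density of the fractional integral transform `𝔄(ρ)` of order 1/2. -/
noncomputable def fracDensity (ρ : Measure ℝ) (u : ℝ) : ℝ≥0∞ :=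
  ∫⁻ s in Set.Ioi u, ENNReal.ofReal (Real.pi ^ (-(1/2) : ℝ) * (s - u) ^ (-(1/2) : ℝ)) ∂ρ

/-- `𝔄(ρ)` is definable, i.e. its density gives a locally finite measure on `(0,∞)`. -/
def fracDefinable (ρ : Measure ℝ) : Prop :=
  ∀ b c : ℝ, 0 < b → b < c → ∫⁻ u in Set.Ioo b c, fracDensity ρ u < ⊤

lemma fracC_lt_top (α : ℝ) (hα : -1 < α) :
    ∫⁻ t in Ioo (0:ℝ) 1, ENNReal.ofReal (t ^ α * (1 - t) ^ (-(1/2) : ℝ)) < ⊤ := by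
  have hmeas : Measurable fun t : ℝ => t ^ α * (1 - t) ^ (-(1/2) : ℝ) := by fun_prop
  have h1 : IntegrableOn (fun t : ℝ => t ^ α * (1 - t) ^ (-(1/2) : ℝ)) (Ioc 0 (1/2)) := by
    have hint : IntegrableOn (fun t : ℝ => t ^ α) (Ioc 0 (1/2)) := by
      have h := intervalIntegral.intervalIntegrable_rpow' (a := (0:ℝ)) (b := 1/2) hα
      rw [intervalIntegrable_iff, uIoc_of_le (by norm_num)] at h
      exact h
    refine Integrable.mono' (hint.const_mul ((2:ℝ) ^ ((1:ℝ)/2)))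
      hmeas.aestronglyMeasurable ?_
    filter_upwards [ae_restrict_mem measurableSet_Ioc] with t ht
    obtain ⟨ht0, ht2⟩ := ht
    have h1t : (0:ℝ) < 1 - t := by norm_num at ht2 ⊢; linarith
    rw [Real.norm_eq_abs, abs_of_nonneg (by positivity)]
    have hle : (1 - t) ^ (-(1/2) : ℝ) ≤ (2:ℝ) ^ ((1:ℝ)/2) := by
      have h2 : ((1:ℝ)/2) ^ (-(1/2) : ℝ) = (2:ℝ) ^ ((1:ℝ)/2) := by
        rw [one_div, Real.inv_rpow (by norm_num), Real.rpow_neg (by norm_num), inv_inv]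
      rw [← h2]
      exact Real.rpow_le_rpow_of_nonpos (by norm_num) (by linarith) (by norm_num)
    calc t ^ α * (1 - t) ^ (-(1/2) : ℝ) ≤ t ^ α * (2:ℝ) ^ ((1:ℝ)/2) :=
          mul_le_mul_of_nonneg_left hle (Real.rpow_nonneg ht0.le _)
      _ = (2:ℝ) ^ ((1:ℝ)/2) * t ^ α := mul_comm _ _
  have h2 : IntegrableOn (fun t : ℝ => t ^ α * (1 - t) ^ (-(1/2) : ℝ)) (Ioo (1/2) 1) := by
    have hint : IntegrableOn (fun t : ℝ => (1 - t) ^ (-(1/2) : ℝ)) (Ioc (1/2) 1) := by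
      have h := (intervalIntegral.intervalIntegrable_rpow' (a := (0:ℝ)) (b := 1/2)
        (show (-1:ℝ) < -(1/2) by norm_num)).comp_sub_left 1
      rw [intervalIntegrable_iff] at h
      norm_num at h
      exact h
    set K : ℝ := max (((1:ℝ)/2) ^ α) 1 with hK
    have hintK : IntegrableOn (fun t : ℝ => K * (1 - t) ^ (-(1/2) : ℝ)) (Ioc (1/2) 1) :=
      hint.const_mul K
    refine Integrable.mono' (hintK.mono_set Ioo_subset_Ioc_self)
      (hmeas.aestronglyMeasurable) ?_
    filter_upwards [ae_restrict_mem measurableSet_Ioo] with t ht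
    obtain ⟨ht0, ht1⟩ := ht
    have htpos : (0:ℝ) < t := by linarith
    have h1t : (0:ℝ) ≤ 1 - t := by linarith
    rw [Real.norm_eq_abs, abs_of_nonneg (by positivity)]
    have htK : t ^ α ≤ K := by
      rcases le_or_gt 0 α with h | h
      · exact le_trans (Real.rpow_le_one htpos.le ht1.le h) (le_max_right _ _)
      · exact le_trans (Real.rpow_le_rpow_of_nonpos (by norm_num) ht0.le h.le)
          (le_max_left _ _)
    exact mul_le_mul_of_nonneg_right htK (Real.rpow_nonneg h1t _)
  have hunion : IntegrableOn (fun t : ℝ => t ^ α * (1 - t) ^ (-(1/2) : ℝ)) (Ioo 0 1) := by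
    refine IntegrableOn.mono_set (h1.union h2) fun x hx => ?_
    rcases le_or_gt x (1/2) with h | h
    · exact Or.inl ⟨hx.1, h⟩
    · exact Or.inr ⟨h, hx.2⟩
  exact hunion.lintegral_lt_top

lemma frac_scaling (α s : ℝ) (hs : 0 < s) :
    ∫⁻ u in Ioo 0 s, ENNReal.ofReal (u ^ α * (s - u) ^ (-(1/2) : ℝ)) =
      ENNReal.ofReal (s ^ (α + 1/2)) *
        ∫⁻ t in Ioo (0:ℝ) 1, ENNReal.ofReal (t ^ α * (1 - t) ^ (-(1/2) : ℝ)) := by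
  set f : ℝ → ℝ≥0∞ := fun u => ENNReal.ofReal (u ^ α * (s - u) ^ (-(1/2) : ℝ)) with hf
  have hfm : Measurable f := by fun_prop
  have hg : Measurable fun t : ℝ => s * t := by fun_prop
  have hpre : Ioo (0:ℝ) 1 = (fun t => s * t) ⁻¹' (Ioo 0 s) := by
    ext x
    simp only [mem_preimage, mem_Ioo]
    constructor
    · rintro ⟨h1, h2⟩; exact ⟨by positivity, by nlinarith⟩
    · rintro ⟨h1, h2⟩
      constructor
      · by_contra hx
        push_neg at hx
        nlinarith
      · nlinarith
  have hmap : Measure.map (fun t => s * t) (volume.restrict (Ioo (0:ℝ) 1)) =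
      ENNReal.ofReal |s⁻¹| • volume.restrict (Ioo 0 s) := by
    rw [hpre, ← Measure.restrict_map hg measurableSet_Ioo,
      show (fun t : ℝ => s * t) = (s * ·) from rfl,
      Real.map_volume_mul_left hs.ne', Measure.restrict_smul]
  have key : ∫⁻ t in Ioo (0:ℝ) 1, f (s * t) = ENNReal.ofReal |s⁻¹| * ∫⁻ u in Ioo 0 s, f u := by
    rw [← lintegral_map hfm hg, hmap, lintegral_smul_measure, smul_eq_mul]
  have key2 : ∫⁻ u in Ioo 0 s, f u = ENNReal.ofReal s * ∫⁻ t in Ioo (0:ℝ) 1, f (s * t) := by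
    rw [key, ← mul_assoc, abs_of_pos (inv_pos.mpr hs), ← ENNReal.ofReal_mul hs.le,
      mul_inv_cancel₀ hs.ne', ENNReal.ofReal_one, one_mul]
  have hcong : ∫⁻ t in Ioo (0:ℝ) 1, f (s * t) =
      ∫⁻ t in Ioo (0:ℝ) 1,
        ENNReal.ofReal (s ^ (α - 1/2)) * ENNReal.ofReal (t ^ α * (1 - t) ^ (-(1/2) : ℝ)) := by
    refine setLIntegral_congr_fun measurableSet_Ioo (fun t ht => ?_)
    obtain ⟨ht0, ht1⟩ := ht
    have h1t : (0:ℝ) < 1 - t := by linarith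
    simp only [hf]
    rw [show s - s * t = s * (1 - t) by ring, Real.mul_rpow hs.le ht0.le,
      Real.mul_rpow hs.le h1t.le, ← ENNReal.ofReal_mul (by positivity)]
    congr 1
    rw [show s ^ (α - 1/2) = s ^ α * s ^ (-(1/2) : ℝ) by
      rw [← Real.rpow_add hs, sub_eq_add_neg]]
    ring
  rw [key2, hcong, lintegral_const_mul' _ _ ENNReal.ofReal_ne_top, ← mul_assoc,
    ← ENNReal.ofReal_mul hs.le]
  congr 2
  nth_rewrite 1 [← Real.rpow_one s]
  rw [← Real.rpow_add hs]
  congr 1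
  ring

theorem fracIntegral_tail_bound (α b : ℝ) (hα : -1 < α) (hb : 0 < b) :
    ∃ C₁ : ℝ≥0∞, C₁ < ⊤ ∧ ∀ ρ : Measure ℝ, fracDefinable ρ →
      ∫⁻ u in Set.Ioi b, ENNReal.ofReal (u ^ α) * fracDensity ρ u ≤
        C₁ * ∫⁻ s in Set.Ioi b, ENNReal.ofReal (s ^ (α + 1/2)) ∂ρ := by
  set c : ℝ := Real.pi ^ (-(1/2) : ℝ) with hc
  have hc0 : 0 ≤ c := Real.rpow_nonneg Real.pi_pos.le _
  set C : ℝ≥0∞ := ∫⁻ t in Ioo (0:ℝ) 1, ENNReal.ofReal (t ^ α * (1 - t) ^ (-(1/2) : ℝ)) with hCdef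
  have hC : C < ⊤ := fracC_lt_top α hα
  have hcC : ENNReal.ofReal c * C ≠ ⊤ := (ENNReal.mul_lt_top ENNReal.ofReal_lt_top hC).ne
  refine ⟨ENNReal.ofReal c * C + 1, ?_, ?_⟩
  · exact ENNReal.add_lt_top.mpr ⟨hcC.lt_top, ENNReal.one_lt_top⟩
  intro ρ _
  set e : ℝ := α + 1/2 with he
  set R : ℝ≥0∞ := ∫⁻ s in Ioi b, ENNReal.ofReal (s ^ e) ∂ρ with hR
  rcases eq_or_ne R ⊤ with hRtop | hRne
  · rw [hRtop, ENNReal.mul_top (by simp)]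
    exact le_top
  set μ : Measure ℝ := ρ.restrict (Ioi b) with hμ
  haveI : SigmaFinite μ := by
    constructor
    refine ⟨⟨fun n => Iio (b + n), fun _ => trivial, fun n => ?_, ?_⟩⟩
    · rw [hμ, Measure.restrict_apply measurableSet_Iio, Iio_inter_Ioi]
      have hm0 : 0 < min (b ^ e) ((b + (n:ℝ)) ^ e) :=
        lt_min (Real.rpow_pos_of_pos hb _) (Real.rpow_pos_of_pos (by positivity) _)
      have hbound : ENNReal.ofReal (min (b ^ e) ((b + (n:ℝ)) ^ e)) * ρ (Ioo b (b + n)) ≤ R := by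
        calc ENNReal.ofReal (min (b ^ e) ((b + (n:ℝ)) ^ e)) * ρ (Ioo b (b + n))
            = ∫⁻ _ in Ioo b (b + (n:ℝ)), ENNReal.ofReal (min (b ^ e) ((b + (n:ℝ)) ^ e)) ∂ρ :=
              (setLIntegral_const _ _).symm
          _ ≤ ∫⁻ s in Ioo b (b + (n:ℝ)), ENNReal.ofReal (s ^ e) ∂ρ := by
              refine setLIntegral_mono (by fun_prop) fun s hs => ENNReal.ofReal_le_ofReal ?_
              rcases le_or_gt 0 e with h | h
              · exact le_trans (min_le_left _ _) (Real.rpow_le_rpow hb.le hs.1.le h)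
              · exact le_trans (min_le_right _ _)
                  (Real.rpow_le_rpow_of_nonpos (lt_trans hb hs.1) hs.2.le h.le)
          _ ≤ R := lintegral_mono_set fun s hs => hs.1
      rw [lt_top_iff_ne_top]
      intro htop
      rw [htop, ENNReal.mul_top (ENNReal.ofReal_pos.mpr hm0).ne'] at hbound
      exact hRne (top_le_iff.mp hbound)
    · refine eq_univ_of_forall fun x => mem_iUnion.mpr ?_
      obtain ⟨n, hn⟩ := exists_nat_gt (x - b)
      exact ⟨n, by simp only [mem_Iio]; linarith⟩
  have hF : Measurable fun p : ℝ × ℝ =>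
      if p.1 < p.2 then ENNReal.ofReal (c * (p.1 ^ α * (p.2 - p.1) ^ (-(1/2) : ℝ))) else 0 := by
    refine Measurable.ite (measurableSet_lt measurable_fst measurable_snd) ?_ measurable_const
    fun_prop
  have step1 : ∀ u ∈ Ioi b, ENNReal.ofReal (u ^ α) * fracDensity ρ u =
      ∫⁻ s, (if u < s then ENNReal.ofReal (c * (u ^ α * (s - u) ^ (-(1/2) : ℝ))) else 0) ∂μ := by
    intro u hu
    rw [mem_Ioi] at hu
    have hu0 : 0 < u := lt_trans hb hu
    have hres : μ.restrict (Ioi u) = ρ.restrict (Ioi u) := by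
      rw [hμ, Measure.restrict_restrict measurableSet_Ioi,
        inter_eq_left.mpr (Ioi_subset_Ioi hu.le)]
    calc ENNReal.ofReal (u ^ α) * fracDensity ρ u
        = ∫⁻ s in Ioi u, ENNReal.ofReal (u ^ α) *
            ENNReal.ofReal (c * (s - u) ^ (-(1/2) : ℝ)) ∂ρ := by
          simp only [fracDensity, ← hc]
          exact (lintegral_const_mul' _ _ ENNReal.ofReal_ne_top).symm
      _ = ∫⁻ s in Ioi u, ENNReal.ofReal (c * (u ^ α * (s - u) ^ (-(1/2) : ℝ))) ∂ρ := by
          refine setLIntegral_congr_fun measurableSet_Ioi (fun s _ => ?_)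
          rw [← ENNReal.ofReal_mul (Real.rpow_nonneg hu0.le _)]
          congr 1
          ring
      _ = ∫⁻ s in Ioi u, ENNReal.ofReal (c * (u ^ α * (s - u) ^ (-(1/2) : ℝ))) ∂μ := by
          rw [← hres]
      _ = ∫⁻ s, (if u < s then ENNReal.ofReal (c * (u ^ α * (s - u) ^ (-(1/2) : ℝ))) else 0) ∂μ := by
          rw [← lintegral_indicator measurableSet_Ioi]
          exact lintegral_congr fun s => by rw [indicator_apply]; simp [mem_Ioi]
  rw [setLIntegral_congr_fun measurableSet_Ioi step1]
  rw [lintegral_lintegral_swap (f := fun u s =>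
      if u < s then ENNReal.ofReal (c * (u ^ α * (s - u) ^ (-(1/2) : ℝ))) else 0) hF.aemeasurable]
  have inner_bound : ∀ s : ℝ,
      (∫⁻ u in Ioi b, (if u < s then ENNReal.ofReal (c * (u ^ α * (s - u) ^ (-(1/2) : ℝ))) else 0)) ≤
        ENNReal.ofReal (s ^ e) * (ENNReal.ofReal c * C) := by
    intro s
    have h1 : (∫⁻ u in Ioi b,
        (if u < s then ENNReal.ofReal (c * (u ^ α * (s - u) ^ (-(1/2) : ℝ))) else 0)) =
        ∫⁻ u in Ioo b s, ENNReal.ofReal (c * (u ^ α * (s - u) ^ (-(1/2) : ℝ))) := by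
      rw [lintegral_congr (fun u => ?_), lintegral_indicator (measurableSet_Iio (a := s)),
        Measure.restrict_restrict measurableSet_Iio, Iio_inter_Ioi]
      rw [indicator_apply]; simp [mem_Iio]
    rw [h1]
    rcases le_or_gt s b with hsb | hbs
    · rw [Ioo_eq_empty (not_lt.mpr hsb), Measure.restrict_empty, lintegral_zero_measure]
      exact zero_le
    · have hs0 : 0 < s := lt_trans hb hbs
      calc ∫⁻ u in Ioo b s, ENNReal.ofReal (c * (u ^ α * (s - u) ^ (-(1/2) : ℝ)))
          ≤ ∫⁻ u in Ioo 0 s, ENNReal.ofReal (c * (u ^ α * (s - u) ^ (-(1/2) : ℝ))) :=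
            lintegral_mono_set (Ioo_subset_Ioo_left hb.le)
        _ = ∫⁻ u in Ioo 0 s, ENNReal.ofReal c *
              ENNReal.ofReal (u ^ α * (s - u) ^ (-(1/2) : ℝ)) := by
            refine setLIntegral_congr_fun measurableSet_Ioo (fun u _ => ?_)
            rw [ENNReal.ofReal_mul hc0]
        _ = ENNReal.ofReal c * ∫⁻ u in Ioo 0 s, ENNReal.ofReal (u ^ α * (s - u) ^ (-(1/2) : ℝ)) :=
            lintegral_const_mul' _ _ ENNReal.ofReal_ne_top
        _ = ENNReal.ofReal c * (ENNReal.ofReal (s ^ e) * C) := by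
            rw [he, frac_scaling α s hs0, hCdef]
        _ = ENNReal.ofReal (s ^ e) * (ENNReal.ofReal c * C) := by ring
  calc ∫⁻ s, (∫⁻ u in Ioi b,
        (if u < s then ENNReal.ofReal (c * (u ^ α * (s - u) ^ (-(1/2) : ℝ))) else 0)) ∂μ
      ≤ ∫⁻ s, ENNReal.ofReal (s ^ e) * (ENNReal.ofReal c * C) ∂μ :=
        lintegral_mono fun s => inner_bound s
    _ = (∫⁻ s, ENNReal.ofReal (s ^ e) ∂μ) * (ENNReal.ofReal c * C) :=
        lintegral_mul_const' _ _ hcC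
    _ = (ENNReal.ofReal c * C) * R := by rw [mul_comm, ← hR]
    _ ≤ (ENNReal.ofReal c * C + 1) * R := mul_le_mul_left le_self_add _
end

section
/- Let $\rho$ be a measure on $(0,\infty)$ for which $\mathfrak{A}(\rho)$ is definable. Then for every $\alpha > -1$ and $b>0$, there is a constant $C_2$ (independent of $\rho$) such that $\int_{(0,b]} u^{\alpha}\,\mathfrak{A}(\rho)(du) \le C_2\big(\int_{(0,b]} s^{\alpha+1/2}\rho(ds) + \int_{(b,\infty)} s^{-1/2}\rho(ds)\big)$. -/
open MeasureTheory Real Set ENNReal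

namespace FracAux

/-- constant for the basic Beta-type estimate -/
noncomputable def K1 (α : ℝ) : ℝ :=
  (1/2:ℝ) ^ (α + 1/2) / (α + 1) + (max 1 ((1/2:ℝ) ^ α)) * 2 * (1/2:ℝ) ^ ((1/2):ℝ)

lemma K1_nonneg {α : ℝ} (hα : -1 < α) : 0 ≤ K1 α := by
  have h1 : (0:ℝ) ≤ (1/2:ℝ) ^ (α + 1/2) := Real.rpow_nonneg (by norm_num) _
  have h2 : (0:ℝ) ≤ (1/2:ℝ) ^ ((1/2):ℝ) := Real.rpow_nonneg (by norm_num) _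
  have h3 : (0:ℝ) ≤ max 1 ((1/2:ℝ) ^ α) := le_trans zero_le_one (le_max_left _ _)
  have h4 : (0:ℝ) < α + 1 := by linarith
  have := div_nonneg h1 h4.le
  unfold K1
  nlinarith

/-- global constant in the theorem -/
noncomputable def D (α b : ℝ) : ℝ :=
  Real.pi ^ (-(1/2) : ℝ) *
    (K1 α + (K1 α * (2*b) ^ (α+1) + 2 ^ ((1/2):ℝ) * (b ^ (α+1) / (α+1))))

lemma lint_rpow {γ : ℝ} (hγ : -1 < γ) {r : ℝ} (hr : 0 < r) :
    ∫⁻ u in Set.Ioc 0 r, ENNReal.ofReal (u ^ γ) = ENNReal.ofReal (r ^ (γ + 1) / (γ + 1)) := by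
  have h1 : (0:ℝ) < γ + 1 := by linarith
  rw [← ofReal_integral_eq_lintegral_ofReal]
  · rw [← intervalIntegral.integral_of_le hr.le, integral_rpow (Or.inl hγ),
      Real.zero_rpow (ne_of_gt h1)]
    norm_num
  · exact (intervalIntegrable_iff_integrableOn_Ioc_of_le hr.le).mp
      (intervalIntegral.intervalIntegrable_rpow' hγ)
  · exact (ae_restrict_iff' measurableSet_Ioc).mpr
      (Filter.Eventually.of_forall fun x hx => Real.rpow_nonneg hx.1.le γ)

lemma lint_rpow_Ioo {γ : ℝ} (hγ : -1 < γ) {r : ℝ} (hr : 0 < r) :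
    ∫⁻ u in Set.Ioo 0 r, ENNReal.ofReal (u ^ γ) = ENNReal.ofReal (r ^ (γ + 1) / (γ + 1)) := by
  rw [Measure.restrict_congr_set Ioo_ae_eq_Ioc, lint_rpow hγ hr]

lemma core1 {α : ℝ} (hα : -1 < α) {s : ℝ} (hs : 0 < s) :
    ∫⁻ u in Set.Ioo 0 s, ENNReal.ofReal (u ^ α) * ENNReal.ofReal ((s - u) ^ (-(1/2) : ℝ)) ≤
      ENNReal.ofReal (K1 α * s ^ (α + 1/2)) := by
  have h2 : 0 < s / 2 := by linarith
  have hα1 : (0:ℝ) < α + 1 := by linarith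
  have hsub : Ioo 0 s ⊆ Ioc 0 (s/2) ∪ Ioo (s/2) s := by
    intro u hu
    rcases le_or_gt u (s/2) with h | h
    · exact Or.inl ⟨hu.1, h⟩
    · exact Or.inr ⟨h, hu.2⟩
  have part1 : ∫⁻ u in Ioc 0 (s/2),
      ENNReal.ofReal (u ^ α) * ENNReal.ofReal ((s - u) ^ (-(1/2) : ℝ)) ≤
      ENNReal.ofReal ((1/2:ℝ) ^ (α + 1/2) / (α + 1) * s ^ (α + 1/2)) := by
    have step : ∀ u ∈ Ioc 0 (s/2),
        ENNReal.ofReal (u ^ α) * ENNReal.ofReal ((s - u) ^ (-(1/2) : ℝ)) ≤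
        ENNReal.ofReal (u ^ α) * ENNReal.ofReal ((s/2) ^ (-(1/2) : ℝ)) := by
      intro u hu
      refine mul_le_mul_right (ENNReal.ofReal_le_ofReal ?_) _
      exact Real.rpow_le_rpow_of_nonpos h2 (by linarith [hu.2]) (by norm_num)
    calc ∫⁻ u in Ioc 0 (s/2),
          ENNReal.ofReal (u ^ α) * ENNReal.ofReal ((s - u) ^ (-(1/2) : ℝ))
        ≤ ∫⁻ u in Ioc 0 (s/2),
            ENNReal.ofReal (u ^ α) * ENNReal.ofReal ((s/2) ^ (-(1/2) : ℝ)) :=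
          setLIntegral_mono' measurableSet_Ioc step
      _ = (∫⁻ u in Ioc 0 (s/2), ENNReal.ofReal (u ^ α)) * ENNReal.ofReal ((s/2) ^ (-(1/2) : ℝ)) :=
          lintegral_mul_const' _ _ ENNReal.ofReal_ne_top
      _ = ENNReal.ofReal ((s/2) ^ (α+1) / (α+1)) * ENNReal.ofReal ((s/2) ^ (-(1/2) : ℝ)) := by
          rw [lint_rpow hα h2]
      _ = ENNReal.ofReal ((s/2) ^ (α+1) / (α+1) * (s/2) ^ (-(1/2) : ℝ)) :=
          (ENNReal.ofReal_mul (div_nonneg (Real.rpow_nonneg h2.le _) hα1.le)).symm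
      _ = ENNReal.ofReal ((1/2:ℝ) ^ (α + 1/2) / (α + 1) * s ^ (α + 1/2)) := by
          congr 1
          rw [div_mul_eq_mul_div, ← Real.rpow_add h2,
            show α + 1 + -(1/2) = α + 1/2 by ring,
            show s / 2 = s * (1/2) by ring, Real.mul_rpow hs.le (by norm_num)]
          ring
  have hM : (0:ℝ) ≤ max 1 ((1/2:ℝ) ^ α) := le_trans zero_le_one (le_max_left _ _)
  have part2 : ∫⁻ u in Ioo (s/2) s,
      ENNReal.ofReal (u ^ α) * ENNReal.ofReal ((s - u) ^ (-(1/2) : ℝ)) ≤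
      ENNReal.ofReal ((max 1 ((1/2:ℝ) ^ α)) * 2 * (1/2:ℝ) ^ ((1/2):ℝ) * s ^ (α + 1/2)) := by
    have hstep2 : ∀ u ∈ Ioo (s/2) s,
        ENNReal.ofReal (u ^ α) * ENNReal.ofReal ((s - u) ^ (-(1/2) : ℝ)) ≤
        ENNReal.ofReal ((max 1 ((1/2:ℝ) ^ α)) * s ^ α) *
          ENNReal.ofReal ((s - u) ^ (-(1/2) : ℝ)) := by
      intro u hu
      refine mul_le_mul_left (ENNReal.ofReal_le_ofReal ?_) _
      rcases le_or_gt 0 α with h0 | h0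
      · have h1 : u ^ α ≤ s ^ α := Real.rpow_le_rpow (le_of_lt (lt_trans h2 hu.1)) hu.2.le h0
        have h2' : s ^ α ≤ max 1 ((1/2:ℝ) ^ α) * s ^ α :=
          le_mul_of_one_le_left (Real.rpow_nonneg hs.le α) (le_max_left _ _)
        linarith
      · have h1 : u ^ α ≤ (s/2) ^ α := Real.rpow_le_rpow_of_nonpos h2 hu.1.le h0.le
        have h3 : (s/2) ^ α = s ^ α * (1/2:ℝ) ^ α := by
          rw [show s / 2 = s * (1/2) by ring, Real.mul_rpow hs.le (by norm_num)]
        have h4 : s ^ α * (1/2:ℝ) ^ α ≤ max 1 ((1/2:ℝ) ^ α) * s ^ α := by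
          rw [mul_comm]
          exact mul_le_mul_of_nonneg_right (le_max_right _ _) (Real.rpow_nonneg hs.le α)
        linarith
    have hpre : (fun x : ℝ => s - x) ⁻¹' (Ioo 0 (s/2)) = Ioo (s/2) s := by
      ext x
      simp only [mem_preimage, mem_Ioo]
      constructor
      · rintro ⟨h1', h2'⟩; constructor <;> linarith
      · rintro ⟨h1', h2'⟩; constructor <;> linarith
    have refl_eq : ∫⁻ u in Ioo (s/2) s, ENNReal.ofReal ((s - u) ^ (-(1/2) : ℝ)) =
        ∫⁻ v in Ioo 0 (s/2), ENNReal.ofReal (v ^ (-(1/2) : ℝ)) := by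
      have hmp : MeasurePreserving (fun x : ℝ => s - x) volume volume :=
        Measure.measurePreserving_sub_left volume s
      have hemb : MeasurableEmbedding (fun x : ℝ => s - x) :=
        (MeasurableEquiv.subLeft s).measurableEmbedding
      calc ∫⁻ u in Ioo (s/2) s, ENNReal.ofReal ((s - u) ^ (-(1/2) : ℝ))
          = ∫⁻ u in (fun x : ℝ => s - x) ⁻¹' (Ioo 0 (s/2)),
              ENNReal.ofReal ((s - u) ^ (-(1/2) : ℝ)) := by rw [hpre]
        _ = ∫⁻ v in Ioo 0 (s/2), ENNReal.ofReal (v ^ (-(1/2) : ℝ)) :=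
            hmp.setLIntegral_comp_preimage_emb hemb (fun v => ENNReal.ofReal (v ^ (-(1/2) : ℝ))) (Ioo 0 (s/2))
    calc ∫⁻ u in Ioo (s/2) s,
          ENNReal.ofReal (u ^ α) * ENNReal.ofReal ((s - u) ^ (-(1/2) : ℝ))
        ≤ ∫⁻ u in Ioo (s/2) s, ENNReal.ofReal ((max 1 ((1/2:ℝ) ^ α)) * s ^ α) *
            ENNReal.ofReal ((s - u) ^ (-(1/2) : ℝ)) :=
          setLIntegral_mono' measurableSet_Ioo hstep2
      _ = ENNReal.ofReal ((max 1 ((1/2:ℝ) ^ α)) * s ^ α) *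
            ∫⁻ u in Ioo (s/2) s, ENNReal.ofReal ((s - u) ^ (-(1/2) : ℝ)) :=
          lintegral_const_mul' _ _ ENNReal.ofReal_ne_top
      _ = ENNReal.ofReal ((max 1 ((1/2:ℝ) ^ α)) * s ^ α) *
            ENNReal.ofReal ((s/2) ^ (-(1/2) + 1 : ℝ) / (-(1/2) + 1)) := by
          rw [refl_eq, lint_rpow_Ioo (by norm_num) h2]
      _ = ENNReal.ofReal ((max 1 ((1/2:ℝ) ^ α)) * s ^ α *
            ((s/2) ^ (-(1/2) + 1 : ℝ) / (-(1/2) + 1))) :=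
          (ENNReal.ofReal_mul (mul_nonneg hM (Real.rpow_nonneg hs.le _))).symm
      _ = ENNReal.ofReal ((max 1 ((1/2:ℝ) ^ α)) * 2 * (1/2:ℝ) ^ ((1/2):ℝ) * s ^ (α + 1/2)) := by
          congr 1
          rw [show (-(1/2) + 1 : ℝ) = (1/2 : ℝ) by norm_num,
            show s / 2 = s * (1/2) by ring, Real.mul_rpow hs.le (by norm_num),
            Real.rpow_add hs]
          ring
  calc ∫⁻ u in Ioo 0 s, ENNReal.ofReal (u ^ α) * ENNReal.ofReal ((s - u) ^ (-(1/2) : ℝ))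
      ≤ ∫⁻ u in Ioc 0 (s/2) ∪ Ioo (s/2) s,
          ENNReal.ofReal (u ^ α) * ENNReal.ofReal ((s - u) ^ (-(1/2) : ℝ)) :=
        lintegral_mono' (Measure.restrict_mono hsub le_rfl) le_rfl
    _ ≤ (∫⁻ u in Ioc 0 (s/2),
          ENNReal.ofReal (u ^ α) * ENNReal.ofReal ((s - u) ^ (-(1/2) : ℝ))) +
        ∫⁻ u in Ioo (s/2) s,
          ENNReal.ofReal (u ^ α) * ENNReal.ofReal ((s - u) ^ (-(1/2) : ℝ)) :=
        lintegral_union_le _ _ _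
    _ ≤ ENNReal.ofReal ((1/2:ℝ) ^ (α + 1/2) / (α + 1) * s ^ (α + 1/2)) +
        ENNReal.ofReal ((max 1 ((1/2:ℝ) ^ α)) * 2 * (1/2:ℝ) ^ ((1/2):ℝ) * s ^ (α + 1/2)) :=
        add_le_add part1 part2
    _ = ENNReal.ofReal (K1 α * s ^ (α + 1/2)) := by
        rw [← ENNReal.ofReal_add
          (mul_nonneg (div_nonneg (Real.rpow_nonneg (by norm_num) _) hα1.le)
            (Real.rpow_nonneg hs.le _))
          (mul_nonneg (mul_nonneg (mul_nonneg hM (by norm_num))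
            (Real.rpow_nonneg (by norm_num) _)) (Real.rpow_nonneg hs.le _))]
        congr 1
        unfold K1
        ring

lemma pointwise_bound {α b : ℝ} (hα : -1 < α) (hb : 0 < b) (s : ℝ) :
    ∫⁻ u in Set.Ioc 0 b, (Set.Ioi u).indicator
        (fun t => ENNReal.ofReal (u ^ α) *
          ENNReal.ofReal (Real.pi ^ (-(1/2) : ℝ) * (t - u) ^ (-(1/2) : ℝ))) s ≤
      ENNReal.ofReal (D α b) *
        ((Set.Ioc 0 b).indicator (fun t => ENNReal.ofReal (t ^ (α + 1/2))) s +
         (Set.Ioi b).indicator (fun t => ENNReal.ofReal (t ^ (-(1/2) : ℝ))) s) := by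
  have hα1 : (0:ℝ) < α + 1 := by linarith
  have hπ : (0:ℝ) ≤ Real.pi ^ (-(1/2) : ℝ) := Real.rpow_nonneg Real.pi_pos.le _
  -- rewrite the integrand as an indicator in `u`
  have hrw : ∀ u : ℝ, (Set.Ioi u).indicator
      (fun t => ENNReal.ofReal (u ^ α) *
        ENNReal.ofReal (Real.pi ^ (-(1/2) : ℝ) * (t - u) ^ (-(1/2) : ℝ))) s
      = (Set.Iio s).indicator
        (fun u => ENNReal.ofReal (Real.pi ^ (-(1/2) : ℝ)) *
          (ENNReal.ofReal (u ^ α) * ENNReal.ofReal ((s - u) ^ (-(1/2) : ℝ)))) u := by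
    intro u
    by_cases h : u < s
    · rw [Set.indicator_of_mem (by exact h) , Set.indicator_of_mem (by exact h),
        ENNReal.ofReal_mul hπ]
      ring
    · rw [Set.indicator_of_notMem (by simpa using h),
        Set.indicator_of_notMem (by simpa using h)]
  simp only [hrw]
  rw [lintegral_indicator measurableSet_Iio, Measure.restrict_restrict measurableSet_Iio,
    lintegral_const_mul' _ _ ENNReal.ofReal_ne_top]
  rcases le_or_gt s 0 with hs0 | hs0
  · have : Iio s ∩ Ioc 0 b = ∅ := by
      ext u; simp only [mem_inter_iff, mem_Iio, mem_Ioc, mem_empty_iff_false, iff_false]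
      rintro ⟨h1, h2, _⟩; linarith
    rw [this]
    simp
  rcases le_or_gt s b with hsb | hsb
  · -- case 0 < s ≤ b
    have hset : Iio s ∩ Ioc 0 b = Ioo 0 s := by
      ext u
      simp only [mem_inter_iff, mem_Iio, mem_Ioc, mem_Ioo]
      constructor
      · rintro ⟨h1, h2, _⟩; exact ⟨h2, h1⟩
      · rintro ⟨h1, h2⟩; exact ⟨h2, h1, by linarith⟩
    rw [hset]
    have hmem : s ∈ Set.Ioc 0 b := ⟨hs0, hsb⟩
    rw [Set.indicator_of_mem hmem]
    have hDge : Real.pi ^ (-(1/2) : ℝ) * K1 α ≤ D α b := by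
      unfold D
      have h1 : (0:ℝ) ≤ K1 α * (2*b) ^ (α+1) :=
        mul_nonneg (K1_nonneg hα) (Real.rpow_nonneg (by linarith) _)
      have h2 : (0:ℝ) ≤ 2 ^ ((1/2):ℝ) * (b ^ (α+1) / (α+1)) :=
        mul_nonneg (Real.rpow_nonneg (by norm_num) _)
          (div_nonneg (Real.rpow_nonneg hb.le _) hα1.le)
      nlinarith
    calc ENNReal.ofReal (Real.pi ^ (-(1/2) : ℝ)) *
          ∫⁻ u in Ioo 0 s, ENNReal.ofReal (u ^ α) * ENNReal.ofReal ((s - u) ^ (-(1/2) : ℝ))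
        ≤ ENNReal.ofReal (Real.pi ^ (-(1/2) : ℝ)) * ENNReal.ofReal (K1 α * s ^ (α + 1/2)) :=
          mul_le_mul_right (core1 hα hs0) _
      _ = ENNReal.ofReal (Real.pi ^ (-(1/2) : ℝ) * K1 α) * ENNReal.ofReal (s ^ (α + 1/2)) := by
          rw [← ENNReal.ofReal_mul hπ, ← ENNReal.ofReal_mul
            (mul_nonneg hπ (K1_nonneg hα)), mul_assoc]
      _ ≤ ENNReal.ofReal (D α b) * ENNReal.ofReal (s ^ (α + 1/2)) :=
          mul_le_mul_left (ENNReal.ofReal_le_ofReal hDge) _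
      _ ≤ ENNReal.ofReal (D α b) * (ENNReal.ofReal (s ^ (α + 1/2)) +
            (Set.Ioi b).indicator (fun t => ENNReal.ofReal (t ^ (-(1/2) : ℝ))) s) :=
          mul_le_mul_right le_self_add _
  · -- case b < s
    have hset : Iio s ∩ Ioc 0 b = Ioc 0 b := by
      ext u
      simp only [mem_inter_iff, mem_Iio, mem_Ioc]
      constructor
      · rintro ⟨_, h⟩; exact h
      · rintro ⟨h1, h2⟩; exact ⟨by linarith, h1, h2⟩
    rw [hset]
    have hs0' : (0:ℝ) < s := lt_trans hb hsb
    have hsneg : (0:ℝ) ≤ s ^ (-(1/2) : ℝ) := Real.rpow_nonneg hs0'.le _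
    have key : ∫⁻ u in Ioc 0 b,
        ENNReal.ofReal (u ^ α) * ENNReal.ofReal ((s - u) ^ (-(1/2) : ℝ)) ≤
        ENNReal.ofReal ((K1 α * (2*b) ^ (α+1) + 2 ^ ((1/2):ℝ) * (b ^ (α+1) / (α+1))) *
          s ^ (-(1/2) : ℝ)) := by
      rcases le_or_gt s (2*b) with hs2b | hs2b
      · -- b < s ≤ 2b : use core1 and s^{α+1/2} ≤ (2b)^{α+1} s^{-1/2}
        have hsub2 : Ioc 0 b ⊆ Ioo 0 s := fun u hu => ⟨hu.1, by linarith [hu.2]⟩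
        have h1 : s ^ (α + 1/2) = s ^ (α+1) * s ^ (-(1/2) : ℝ) := by
          rw [← Real.rpow_add hs0', show α + 1 + -(1/2) = α + 1/2 by ring]
        have h2 : s ^ (α+1) ≤ (2*b) ^ (α+1) :=
          Real.rpow_le_rpow hs0'.le hs2b hα1.le
        have h3 : K1 α * s ^ (α + 1/2) ≤
            (K1 α * (2*b) ^ (α+1) + 2 ^ ((1/2):ℝ) * (b ^ (α+1) / (α+1))) *
              s ^ (-(1/2) : ℝ) := by
          have h4 : (0:ℝ) ≤ 2 ^ ((1/2):ℝ) * (b ^ (α+1) / (α+1)) :=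
            mul_nonneg (Real.rpow_nonneg (by norm_num) _)
              (div_nonneg (Real.rpow_nonneg hb.le _) hα1.le)
          have h5 := mul_le_mul_of_nonneg_right h2 hsneg
          nlinarith [K1_nonneg hα, mul_le_mul_of_nonneg_left h5 (K1_nonneg hα)]
        calc ∫⁻ u in Ioc 0 b,
              ENNReal.ofReal (u ^ α) * ENNReal.ofReal ((s - u) ^ (-(1/2) : ℝ))
            ≤ ∫⁻ u in Ioo 0 s,
                ENNReal.ofReal (u ^ α) * ENNReal.ofReal ((s - u) ^ (-(1/2) : ℝ)) :=
              lintegral_mono' (Measure.restrict_mono hsub2 le_rfl) le_rfl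
          _ ≤ ENNReal.ofReal (K1 α * s ^ (α + 1/2)) := core1 hα hs0'
          _ ≤ _ := ENNReal.ofReal_le_ofReal h3
      · -- 2b < s
        have hhalf : (0:ℝ) < s / 2 := by linarith
        have step : ∀ u ∈ Ioc 0 b,
            ENNReal.ofReal (u ^ α) * ENNReal.ofReal ((s - u) ^ (-(1/2) : ℝ)) ≤
            ENNReal.ofReal (u ^ α) * ENNReal.ofReal ((s/2) ^ (-(1/2) : ℝ)) := by
          intro u hu
          refine mul_le_mul_right (ENNReal.ofReal_le_ofReal ?_) _
          exact Real.rpow_le_rpow_of_nonpos hhalf (by linarith [hu.2]) (by norm_num)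
        have hval : (s/2 : ℝ) ^ (-(1/2) : ℝ) = 2 ^ ((1/2):ℝ) * s ^ (-(1/2) : ℝ) := by
          rw [Real.rpow_neg (by positivity : (0:ℝ) ≤ s/2),
            Real.div_rpow hs0'.le (by norm_num : (0:ℝ) ≤ 2), inv_div,
            Real.rpow_neg hs0'.le, div_eq_mul_inv]
        calc ∫⁻ u in Ioc 0 b,
              ENNReal.ofReal (u ^ α) * ENNReal.ofReal ((s - u) ^ (-(1/2) : ℝ))
            ≤ ∫⁻ u in Ioc 0 b,
                ENNReal.ofReal (u ^ α) * ENNReal.ofReal ((s/2) ^ (-(1/2) : ℝ)) :=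
              setLIntegral_mono' measurableSet_Ioc step
          _ = (∫⁻ u in Ioc 0 b, ENNReal.ofReal (u ^ α)) *
                ENNReal.ofReal ((s/2) ^ (-(1/2) : ℝ)) :=
              lintegral_mul_const' _ _ ENNReal.ofReal_ne_top
          _ = ENNReal.ofReal (b ^ (α+1) / (α+1)) * ENNReal.ofReal ((s/2) ^ (-(1/2) : ℝ)) := by
              rw [lint_rpow hα hb]
          _ = ENNReal.ofReal (b ^ (α+1) / (α+1) * ((s/2) ^ (-(1/2) : ℝ))) :=
              (ENNReal.ofReal_mul (div_nonneg (Real.rpow_nonneg hb.le _) hα1.le)).symm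
          _ ≤ _ := by
              apply ENNReal.ofReal_le_ofReal
              rw [hval]
              have h4 : (0:ℝ) ≤ K1 α * (2*b) ^ (α+1) :=
                mul_nonneg (K1_nonneg hα) (Real.rpow_nonneg (by linarith) _)
              nlinarith
    have hmem : s ∈ Set.Ioi b := hsb
    rw [Set.indicator_of_mem hmem]
    calc ENNReal.ofReal (Real.pi ^ (-(1/2) : ℝ)) *
          ∫⁻ u in Ioc 0 b, ENNReal.ofReal (u ^ α) * ENNReal.ofReal ((s - u) ^ (-(1/2) : ℝ))
        ≤ ENNReal.ofReal (Real.pi ^ (-(1/2) : ℝ)) *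
            ENNReal.ofReal ((K1 α * (2*b) ^ (α+1) + 2 ^ ((1/2):ℝ) * (b ^ (α+1) / (α+1))) *
              s ^ (-(1/2) : ℝ)) := mul_le_mul_right key _
      _ = ENNReal.ofReal (Real.pi ^ (-(1/2) : ℝ) *
            (K1 α * (2*b) ^ (α+1) + 2 ^ ((1/2):ℝ) * (b ^ (α+1) / (α+1)))) *
            ENNReal.ofReal (s ^ (-(1/2) : ℝ)) := by
          rw [← ENNReal.ofReal_mul hπ, ← ENNReal.ofReal_mul (by
            apply mul_nonneg hπ
            have h1 : (0:ℝ) ≤ K1 α * (2*b) ^ (α+1) :=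
              mul_nonneg (K1_nonneg hα) (Real.rpow_nonneg (by linarith) _)
            have h2 : (0:ℝ) ≤ 2 ^ ((1/2):ℝ) * (b ^ (α+1) / (α+1)) :=
              mul_nonneg (Real.rpow_nonneg (by norm_num) _)
                (div_nonneg (Real.rpow_nonneg hb.le _) hα1.le)
            linarith), mul_assoc]
      _ ≤ ENNReal.ofReal (D α b) * ENNReal.ofReal (s ^ (-(1/2) : ℝ)) := by
          apply mul_le_mul_left
          apply ENNReal.ofReal_le_ofReal
          unfold D
          nlinarith [K1_nonneg hα, hπ]
      _ ≤ ENNReal.ofReal (D α b) *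
            ((Set.Ioc 0 b).indicator (fun t => ENNReal.ofReal (t ^ (α + 1/2))) s +
              ENNReal.ofReal (s ^ (-(1/2) : ℝ))) :=
          mul_le_mul_right le_add_self _

lemma main_sf {α b : ℝ} (hα : -1 < α) (hb : 0 < b) (ν : Measure ℝ) [SigmaFinite ν] :
    ∫⁻ u in Set.Ioc 0 b, ENNReal.ofReal (u ^ α) * fracDensity ν u ≤
      ENNReal.ofReal (D α b) *
        ((∫⁻ s in Set.Ioc 0 b, ENNReal.ofReal (s ^ (α + 1/2)) ∂ν) +
          ∫⁻ s in Set.Ioi b, ENNReal.ofReal (s ^ (-(1/2) : ℝ)) ∂ν) := by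
  set F : ℝ → ℝ → ℝ≥0∞ := fun u t => (Set.Ioi u).indicator
    (fun t => ENNReal.ofReal (u ^ α) *
      ENNReal.ofReal (Real.pi ^ (-(1/2) : ℝ) * (t - u) ^ (-(1/2) : ℝ))) t with hF
  have hFmeas : Measurable (Function.uncurry F) := by
    have : Function.uncurry F = fun p : ℝ × ℝ =>
        ({q : ℝ × ℝ | q.1 < q.2}.indicator
          (fun q => ENNReal.ofReal (q.1 ^ α) *
            ENNReal.ofReal (Real.pi ^ (-(1/2) : ℝ) * (q.2 - q.1) ^ (-(1/2) : ℝ)))) p := by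
      ext p
      by_cases h : p.1 < p.2
      · rw [Function.uncurry, hF]
        simp only [Set.indicator_of_mem (show p.2 ∈ Set.Ioi p.1 from h),
          Set.indicator_of_mem (show p ∈ {q : ℝ × ℝ | q.1 < q.2} from h)]
      · rw [Function.uncurry, hF]
        simp only [Set.indicator_of_notMem (show p.2 ∉ Set.Ioi p.1 from h),
          Set.indicator_of_notMem (show p ∉ {q : ℝ × ℝ | q.1 < q.2} from h)]
    rw [this]
    apply Measurable.indicator
    · fun_prop
    · exact measurableSet_lt measurable_fst measurable_snd
  have step1 : ∀ u : ℝ, ENNReal.ofReal (u ^ α) * fracDensity ν u = ∫⁻ t, F u t ∂ν := by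
    intro u
    unfold fracDensity
    rw [← lintegral_const_mul' _ _ ENNReal.ofReal_ne_top,
      ← lintegral_indicator measurableSet_Ioi]
  calc ∫⁻ u in Set.Ioc 0 b, ENNReal.ofReal (u ^ α) * fracDensity ν u
      = ∫⁻ u in Set.Ioc 0 b, ∫⁻ t, F u t ∂ν := by
        exact lintegral_congr fun u => step1 u
    _ = ∫⁻ t, (∫⁻ u in Set.Ioc 0 b, F u t) ∂ν := by
        exact lintegral_lintegral_swap (μ := volume.restrict (Set.Ioc 0 b)) (ν := ν)
          hFmeas.aemeasurable
    _ ≤ ∫⁻ t, ENNReal.ofReal (D α b) *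
          ((Set.Ioc 0 b).indicator (fun r => ENNReal.ofReal (r ^ (α + 1/2))) t +
            (Set.Ioi b).indicator (fun r => ENNReal.ofReal (r ^ (-(1/2) : ℝ))) t) ∂ν :=
        lintegral_mono (fun t => pointwise_bound hα hb t)
    _ = ENNReal.ofReal (D α b) *
          ((∫⁻ s in Set.Ioc 0 b, ENNReal.ofReal (s ^ (α + 1/2)) ∂ν) +
            ∫⁻ s in Set.Ioi b, ENNReal.ofReal (s ^ (-(1/2) : ℝ)) ∂ν) := by
        rw [lintegral_const_mul' _ _ ENNReal.ofReal_ne_top,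
          lintegral_add_left (Measurable.indicator (by fun_prop) measurableSet_Ioc), lintegral_indicator measurableSet_Ioc,
          lintegral_indicator measurableSet_Ioi]

lemma sf_aux {α b : ℝ} (hα : -1 < α) (hb : 0 < b) (ν : Measure ℝ) (hν : ν (Set.Iic 0) = 0)
    (hfin : (∫⁻ s in Set.Ioc 0 b, ENNReal.ofReal (s ^ (α + 1/2)) ∂ν) +
      (∫⁻ s in Set.Ioi b, ENNReal.ofReal (s ^ (-(1/2) : ℝ)) ∂ν) ≠ ⊤) :
    SigmaFinite ν := by
  set G : ℝ → ℝ≥0∞ := fun s =>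
    (Set.Ioc 0 b).indicator (fun t => ENNReal.ofReal (t ^ (α + 1/2))) s +
      (Set.Ioi b).indicator (fun t => ENNReal.ofReal (t ^ (-(1/2) : ℝ))) s with hG
  have hGm : Measurable G := by
    apply Measurable.add
    · exact Measurable.indicator (by fun_prop) measurableSet_Ioc
    · exact Measurable.indicator (by fun_prop) measurableSet_Ioi
  have hGint : ∫⁻ s, G s ∂ν ≠ ⊤ := by
    rw [hG]
    rw [lintegral_add_left (Measurable.indicator (by fun_prop) measurableSet_Ioc),
      lintegral_indicator measurableSet_Ioc, lintegral_indicator measurableSet_Ioi]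
    exact hfin
  have hGpos : ∀ s : ℝ, 0 < s → G s ≠ 0 := by
    intro s hs h0
    rw [hG, add_eq_zero] at h0
    rcases le_or_gt s b with h | h
    · have h1 : (Set.Ioc 0 b).indicator (fun t => ENNReal.ofReal (t ^ (α + 1/2))) s =
          ENNReal.ofReal (s ^ (α + 1/2)) := Set.indicator_of_mem (show s ∈ Set.Ioc 0 b from ⟨hs, h⟩) _
      rw [h1] at h0
      exact absurd h0.1 (ne_of_gt (ENNReal.ofReal_pos.mpr (Real.rpow_pos_of_pos hs _)))
    · have h1 : (Set.Ioi b).indicator (fun t => ENNReal.ofReal (t ^ (-(1/2) : ℝ))) s =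
          ENNReal.ofReal (s ^ (-(1/2) : ℝ)) := Set.indicator_of_mem (show s ∈ Set.Ioi b from h) _
      rw [h1] at h0
      exact absurd h0.2 (ne_of_gt (ENNReal.ofReal_pos.mpr (Real.rpow_pos_of_pos hs _)))
  refine Measure.sigmaFinite_of_countable
    (countable_range (fun n : ℕ => {s : ℝ | ((n : ℝ≥0∞) + 1)⁻¹ ≤ G s} ∪ Set.Iic 0)) ?_ ?_
  · rintro t ht
    simp only [Set.mem_range] at ht
    obtain ⟨n, rfl⟩ := ht
    have h1 : ν {s : ℝ | ((n : ℝ≥0∞) + 1)⁻¹ ≤ G s} ≤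
        (∫⁻ s, G s ∂ν) / ((n : ℝ≥0∞) + 1)⁻¹ :=
      meas_ge_le_lintegral_div hGm.aemeasurable (by simp) (by simp)
    calc ν ({s : ℝ | ((n : ℝ≥0∞) + 1)⁻¹ ≤ G s} ∪ Set.Iic 0)
        ≤ ν {s : ℝ | ((n : ℝ≥0∞) + 1)⁻¹ ≤ G s} + ν (Set.Iic 0) := measure_union_le _ _
      _ = ν {s : ℝ | ((n : ℝ≥0∞) + 1)⁻¹ ≤ G s} := by rw [hν, add_zero]
      _ ≤ (∫⁻ s, G s ∂ν) / ((n : ℝ≥0∞) + 1)⁻¹ := h1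
      _ < ⊤ := ENNReal.div_lt_top hGint (by simp)
  · rw [sUnion_range]
    ext s
    simp only [mem_iUnion, mem_union, mem_setOf_eq, mem_Iic, mem_univ, iff_true]
    rcases le_or_gt s 0 with h | h
    · exact ⟨0, Or.inr h⟩
    · obtain ⟨n, hn⟩ := ENNReal.exists_inv_nat_lt (hGpos s h)
      refine ⟨n, Or.inl (le_trans ?_ hn.le)⟩
      exact ENNReal.inv_le_inv.mpr le_self_add

end FracAux

theorem fracIntegral_near_zero_bound (α b : ℝ) (hα : -1 < α) (hb : 0 < b) :
    ∃ C₂ : ℝ≥0∞, C₂ < ⊤ ∧ ∀ ρ : Measure ℝ, fracDefinable ρ →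
      ∫⁻ u in Set.Ioc 0 b, ENNReal.ofReal (u ^ α) * fracDensity ρ u ≤
        C₂ * (∫⁻ s in Set.Ioc 0 b, ENNReal.ofReal (s ^ (α + 1/2)) ∂ρ +
          ∫⁻ s in Set.Ioi b, ENNReal.ofReal (s ^ (-(1/2) : ℝ)) ∂ρ) := by
  refine ⟨ENNReal.ofReal (FracAux.D α b) + 1, ?_, ?_⟩
  · exact ENNReal.add_lt_top.mpr ⟨ENNReal.ofReal_lt_top, ENNReal.one_lt_top⟩
  intro ρ _hdef
  by_cases htop : (∫⁻ s in Set.Ioc 0 b, ENNReal.ofReal (s ^ (α + 1/2)) ∂ρ +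
      ∫⁻ s in Set.Ioi b, ENNReal.ofReal (s ^ (-(1/2) : ℝ)) ∂ρ) = ⊤
  · rw [htop, ENNReal.mul_top (by simp)]
    exact le_top
  set ν := ρ.restrict (Set.Ioi 0) with hνdef
  have hres1 : ν.restrict (Set.Ioc 0 b) = ρ.restrict (Set.Ioc 0 b) := by
    rw [hνdef, Measure.restrict_restrict measurableSet_Ioc,
      inter_eq_left.mpr Ioc_subset_Ioi_self]
  have hres2 : ν.restrict (Set.Ioi b) = ρ.restrict (Set.Ioi b) := by
    rw [hνdef, Measure.restrict_restrict measurableSet_Ioi,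
      inter_eq_left.mpr (Ioi_subset_Ioi hb.le)]
  have hν0 : ν (Set.Iic 0) = 0 := by
    rw [hνdef, Measure.restrict_apply measurableSet_Iic]
    convert measure_empty (μ := ρ)
    ext x; simp only [mem_inter_iff, mem_Iic, mem_Ioi, mem_empty_iff_false, iff_false]
    rintro ⟨h1, h2⟩; linarith
  have hfin' : (∫⁻ s in Set.Ioc 0 b, ENNReal.ofReal (s ^ (α + 1/2)) ∂ν) +
      (∫⁻ s in Set.Ioi b, ENNReal.ofReal (s ^ (-(1/2) : ℝ)) ∂ν) ≠ ⊤ := by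
    show lintegral (ν.restrict (Set.Ioc 0 b)) _ + lintegral (ν.restrict (Set.Ioi b)) _ ≠ ⊤
    rw [hres1, hres2]
    exact htop
  haveI : SigmaFinite ν := FracAux.sf_aux hα hb ν hν0 hfin'
  have hLHS : ∫⁻ u in Set.Ioc 0 b, ENNReal.ofReal (u ^ α) * fracDensity ρ u =
      ∫⁻ u in Set.Ioc 0 b, ENNReal.ofReal (u ^ α) * fracDensity ν u := by
    apply setLIntegral_congr_fun measurableSet_Ioc
    intro u hu
    have hd : fracDensity ν u = fracDensity ρ u := by
      unfold fracDensity
      show lintegral (ν.restrict (Set.Ioi u)) _ = _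
      rw [hνdef, Measure.restrict_restrict measurableSet_Ioi,
        inter_eq_left.mpr (Ioi_subset_Ioi hu.1.le)]
    show _ * _ = _ * _
    rw [hd]
  calc ∫⁻ u in Set.Ioc 0 b, ENNReal.ofReal (u ^ α) * fracDensity ρ u
      = ∫⁻ u in Set.Ioc 0 b, ENNReal.ofReal (u ^ α) * fracDensity ν u := hLHS
    _ ≤ ENNReal.ofReal (FracAux.D α b) *
          ((∫⁻ s in Set.Ioc 0 b, ENNReal.ofReal (s ^ (α + 1/2)) ∂ν) +
            ∫⁻ s in Set.Ioi b, ENNReal.ofReal (s ^ (-(1/2) : ℝ)) ∂ν) := FracAux.main_sf hα hb ν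
    _ = ENNReal.ofReal (FracAux.D α b) *
          ((∫⁻ s in Set.Ioc 0 b, ENNReal.ofReal (s ^ (α + 1/2)) ∂ρ) +
            ∫⁻ s in Set.Ioi b, ENNReal.ofReal (s ^ (-(1/2) : ℝ)) ∂ρ) := by
        show ENNReal.ofReal (FracAux.D α b) *
          (lintegral (ν.restrict (Set.Ioc 0 b)) _ + lintegral (ν.restrict (Set.Ioi b)) _) = _
        rw [hres1, hres2]
    _ ≤ (ENNReal.ofReal (FracAux.D α b) + 1) *
          ((∫⁻ s in Set.Ioc 0 b, ENNReal.ofReal (s ^ (α + 1/2)) ∂ρ) +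
            ∫⁻ s in Set.Ioi b, ENNReal.ofReal (s ^ (-(1/2) : ℝ)) ∂ρ) :=
        mul_le_mul_left le_self_add _
end

section
/- Let $\nu$ be a L\'evy measure on $\mathbb{R}^d$ and define $\Upsilon^0(\nu)(B) = \int_0^{\infty}\nu(u^{-1}B)e^{-u}du$. Then $\int_{\mathbb{R}^d}(1\wedge|x|)\,\Upsilon^0(\nu)(dx) < \infty$ if and only if $\int_{\mathbb{R}^d}(1\wedge|x|)\,\nu(dx) < \infty$. -/
open MeasureTheory Real Set ENNReal

variable {d : ℕ}

private lemma aux_min_nonneg {r : ℝ} (hr : 0 ≤ r) : 0 ≤ min 1 r :=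
  le_min zero_le_one hr

private lemma aux_up {u r : ℝ} (hu : 0 < u) (hr : 0 ≤ r) :
    Real.exp (-u) * min 1 (u * r) ≤ 2 * Real.exp (-(u / 2)) * min 1 r := by
  have hmin0 : 0 ≤ min 1 r := aux_min_nonneg hr
  have hmin : min 1 (u * r) ≤ (1 + u) * min 1 r := by
    rcases le_total u 1 with h | h
    · have h1 : min 1 (u * r) ≤ min 1 r :=
        min_le_min le_rfl (mul_le_of_le_one_left hr h)
      nlinarith
    · have h1 : min 1 (u * r) ≤ min u (u * r) := min_le_min h le_rfl
      have h2 : min u (u * r) = u * min 1 r := by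
        rw [mul_min_of_nonneg _ _ hu.le, mul_one]
      nlinarith
  have hexp : Real.exp (-u) * (1 + u) ≤ 2 * Real.exp (-(u / 2)) := by
    have h1 : u / 2 + 1 ≤ Real.exp (u / 2) := Real.add_one_le_exp (u / 2)
    have h2 : Real.exp (-u) * Real.exp (u / 2) = Real.exp (-(u / 2)) := by
      rw [← Real.exp_add]; ring_nf
    nlinarith [Real.exp_pos (-u), Real.exp_pos (u / 2)]
  calc Real.exp (-u) * min 1 (u * r) ≤ Real.exp (-u) * ((1 + u) * min 1 r) := by
        nlinarith [Real.exp_pos (-u)]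
    _ = Real.exp (-u) * (1 + u) * min 1 r := by ring
    _ ≤ 2 * Real.exp (-(u / 2)) * min 1 r := by nlinarith

private lemma aux_lo {u r : ℝ} (hu1 : 1 ≤ u) (hu2 : u ≤ 2) (hr : 0 ≤ r) :
    Real.exp (-2) * min 1 r ≤ Real.exp (-u) * min 1 (u * r) := by
  have h1 : Real.exp (-2) ≤ Real.exp (-u) := Real.exp_le_exp.2 (by linarith)
  have h2 : min 1 r ≤ min 1 (u * r) :=
    min_le_min le_rfl (le_mul_of_one_le_left hr hu1)
  exact mul_le_mul h1 h2 (aux_min_nonneg hr) (Real.exp_pos _).le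

private lemma measurable_smul_const_aux (u : ℝ) :
    Measurable fun x : EuclideanSpace ℝ (Fin d) => u • x :=
  (continuous_const_smul u).measurable

/-- The Upsilon transformation `Υ⁰` with dilation measure `e^{-u} du`:
`Υ⁰(ν)(B) = ∫₀^∞ ν(u⁻¹B) e^{-u} du`. -/
noncomputable def Upsilon0 (ν : Measure (EuclideanSpace ℝ (Fin d))) :
    Measure (EuclideanSpace ℝ (Fin d)) :=
  ((volume.restrict (Set.Ioi (0 : ℝ))).withDensity
      (fun u => ENNReal.ofReal (Real.exp (-u)))).bind
    fun u => Measure.map (fun x : EuclideanSpace ℝ (Fin d) => u • x) ν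

theorem upsilon0_first_moment_iff (ν : Measure (EuclideanSpace ℝ (Fin d)))
    (hν0 : ν {0} = 0) (hν : ∫⁻ x, ENNReal.ofReal (min 1 (‖x‖ ^ 2)) ∂ν < ⊤) :
    (∫⁻ x, ENNReal.ofReal (min 1 ‖x‖) ∂(Upsilon0 ν) < ⊤) ↔
      (∫⁻ x, ENNReal.ofReal (min 1 ‖x‖) ∂ν < ⊤) := by
  classical
  set E := EuclideanSpace ℝ (Fin d)
  have hf2m : Measurable fun x : E => ENNReal.ofReal (min 1 (‖x‖ ^ 2)) :=
    (measurable_const.min (measurable_norm.pow_const 2)).ennreal_ofReal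
  -- σ-finiteness of ν
  haveI hνsf : SigmaFinite ν := by
    refine ⟨⟨⟨fun n => {x : E | ((n : ℝ) + 1)⁻¹ ≤ ‖x‖} ∪ {0}, fun _ => mem_univ _, ?_, ?_⟩⟩⟩
    · intro n
      set ε : ℝ≥0∞ := ENNReal.ofReal (min 1 (((n : ℝ) + 1)⁻¹ ^ 2)) with hε
      have hεpos : 0 < ε :=
        ENNReal.ofReal_pos.2 (lt_min one_pos (by positivity))
      have hsub : {x : E | ((n : ℝ) + 1)⁻¹ ≤ ‖x‖}
          ⊆ {x : E | ε ≤ ENNReal.ofReal (min 1 (‖x‖ ^ 2))} := by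
        intro x hx
        exact ENNReal.ofReal_le_ofReal
          (min_le_min le_rfl (pow_le_pow_left₀ (by positivity) hx 2))
      calc ν ({x : E | ((n : ℝ) + 1)⁻¹ ≤ ‖x‖} ∪ {0})
          ≤ ν {x : E | ((n : ℝ) + 1)⁻¹ ≤ ‖x‖} + ν {0} := measure_union_le _ _
        _ = ν {x : E | ((n : ℝ) + 1)⁻¹ ≤ ‖x‖} := by rw [hν0, add_zero]
        _ ≤ ν {x : E | ε ≤ ENNReal.ofReal (min 1 (‖x‖ ^ 2))} := measure_mono hsub
        _ ≤ (∫⁻ x, ENNReal.ofReal (min 1 (‖x‖ ^ 2)) ∂ν) / ε :=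
            meas_ge_le_lintegral_div hf2m.aemeasurable hεpos.ne' ofReal_lt_top.ne
        _ < ⊤ := ENNReal.div_lt_top hν.ne hεpos.ne'
    · ext x
      simp only [mem_iUnion, mem_union, mem_setOf_eq, mem_singleton_iff, mem_univ, iff_true]
      rcases eq_or_ne x 0 with hx | hx
      · exact ⟨0, Or.inr hx⟩
      · have hxpos : 0 < ‖x‖ := norm_pos_iff.2 hx
        obtain ⟨n, hn⟩ := exists_nat_gt ‖x‖⁻¹
        refine ⟨n, Or.inl ?_⟩
        rw [mem_setOf_eq, inv_le_comm₀ (by positivity) hxpos]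
        exact le_of_lt (lt_of_lt_of_le hn (by linarith))
  have hfm : Measurable fun x : E => ENNReal.ofReal (min 1 ‖x‖) :=
    (measurable_const.min measurable_norm).ennreal_ofReal
  have hρ : Measurable fun u : ℝ => ENNReal.ofReal (Real.exp (-u)) :=
    (Real.measurable_exp.comp measurable_neg).ennreal_ofReal
  have hker : Measurable fun u : ℝ => Measure.map (fun x : E => u • x) ν := by
    apply Measure.measurable_of_measurable_coe
    intro s hs
    have heq : ∀ u : ℝ, Measure.map (fun x : E => u • x) ν s
        = ν (Prod.mk u ⁻¹' ((fun p : ℝ × E => p.1 • p.2) ⁻¹' s)) := fun u =>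
      Measure.map_apply (measurable_smul_const_aux u) hs
    simp_rw [heq]
    exact measurable_measure_prodMk_left ((continuous_smul.measurable) hs)
  have hG : Measurable fun u : ℝ =>
      ∫⁻ x, ENNReal.ofReal (min 1 ‖x‖) ∂(Measure.map (fun x : E => u • x) ν) :=
    (Measure.measurable_lintegral hfm).comp hker
  have h1 : ∫⁻ x, ENNReal.ofReal (min 1 ‖x‖) ∂(Upsilon0 ν)
      = ∫⁻ u in Ioi (0 : ℝ),
          ENNReal.ofReal (Real.exp (-u)) * ∫⁻ x, ENNReal.ofReal (min 1 ‖u • x‖) ∂ν := by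
    rw [Upsilon0, Measure.lintegral_bind hker.aemeasurable hfm.aemeasurable,
      lintegral_withDensity_eq_lintegral_mul _ hρ hG]
    refine lintegral_congr fun u => ?_
    simp only [Pi.mul_apply]
    rw [lintegral_map hfm (measurable_smul_const_aux u)]
  have hF : Measurable (Function.uncurry fun (u : ℝ) (x : E) =>
      ENNReal.ofReal (Real.exp (-u)) * ENNReal.ofReal (min 1 ‖u • x‖)) := by
    apply Measurable.mul (f := fun p : ℝ × E => ENNReal.ofReal (Real.exp (-p.1)))
      (g := fun p : ℝ × E => ENNReal.ofReal (min 1 ‖p.1 • p.2‖))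
    · exact hρ.comp measurable_fst
    · exact hfm.comp continuous_smul.measurable
  have h2 : ∫⁻ u in Ioi (0 : ℝ),
        ENNReal.ofReal (Real.exp (-u)) * ∫⁻ x, ENNReal.ofReal (min 1 ‖u • x‖) ∂ν
      = ∫⁻ x : E, (∫⁻ u in Ioi (0 : ℝ),
          ENNReal.ofReal (Real.exp (-u)) * ENNReal.ofReal (min 1 ‖u • x‖)) ∂ν := by
    rw [← lintegral_lintegral_swap hF.aemeasurable]
    exact lintegral_congr fun u =>
      (lintegral_const_mul _ (hfm.comp (measurable_smul_const_aux u))).symm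
  set C : ℝ≥0∞ := ∫⁻ u in Ioi (0 : ℝ), ENNReal.ofReal (2 * Real.exp (-(u / 2))) with hC
  have hCfin : C < ⊤ := by
    have hint : IntegrableOn (fun u : ℝ => 2 * Real.exp (-(u / 2))) (Ioi 0) := by
      have h := (exp_neg_integrableOn_Ioi 0 (b := 1 / 2) (by norm_num)).const_mul 2
      have h2 : IntegrableOn (fun x : ℝ => 2 * Real.exp (-(1 / 2) * x)) (Ioi 0) := h
      exact h2.congr_fun (fun u _ => by dsimp only; rw [show -(1 / 2 : ℝ) * u = -(u / 2) by ring])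
        measurableSet_Ioi
    exact hint.setLIntegral_lt_top
  have hmeas2 : Measurable fun u : ℝ => ENNReal.ofReal (2 * Real.exp (-(u / 2))) :=
    (measurable_const.mul (Real.measurable_exp.comp (measurable_id.div_const 2).neg)).ennreal_ofReal
  have hJup : ∀ x : E,
      (∫⁻ u in Ioi (0 : ℝ),
        ENNReal.ofReal (Real.exp (-u)) * ENNReal.ofReal (min 1 ‖u • x‖))
        ≤ C * ENNReal.ofReal (min 1 ‖x‖) := by
    intro x
    have hae : ∀ᵐ u ∂(volume.restrict (Ioi (0 : ℝ))),
        ENNReal.ofReal (Real.exp (-u)) * ENNReal.ofReal (min 1 ‖u • x‖)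
          ≤ ENNReal.ofReal (2 * Real.exp (-(u / 2))) * ENNReal.ofReal (min 1 ‖x‖) := by
      filter_upwards [ae_restrict_mem measurableSet_Ioi] with u hu
      rw [← ENNReal.ofReal_mul (Real.exp_pos _).le,
        ← ENNReal.ofReal_mul (by positivity)]
      apply ENNReal.ofReal_le_ofReal
      rw [norm_smul, Real.norm_eq_abs, abs_of_pos hu]
      exact aux_up hu (norm_nonneg x)
    calc _ ≤ ∫⁻ u in Ioi (0 : ℝ),
          ENNReal.ofReal (2 * Real.exp (-(u / 2))) * ENNReal.ofReal (min 1 ‖x‖) :=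
        lintegral_mono_ae hae
      _ = C * ENNReal.ofReal (min 1 ‖x‖) := lintegral_mul_const _ hmeas2
  have hJlo : ∀ x : E,
      ENNReal.ofReal (Real.exp (-2)) * ENNReal.ofReal (min 1 ‖x‖)
        ≤ ∫⁻ u in Ioi (0 : ℝ),
            ENNReal.ofReal (Real.exp (-u)) * ENNReal.ofReal (min 1 ‖u • x‖) := by
    intro x
    have hsub : Ioc (1 : ℝ) 2 ⊆ Ioi 0 := fun u hu => lt_trans one_pos hu.1
    calc ENNReal.ofReal (Real.exp (-2)) * ENNReal.ofReal (min 1 ‖x‖)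
        = ∫⁻ _ in Ioc (1 : ℝ) 2,
            ENNReal.ofReal (Real.exp (-2)) * ENNReal.ofReal (min 1 ‖x‖) := by
          rw [setLIntegral_const, Real.volume_Ioc]
          norm_num
      _ ≤ ∫⁻ u in Ioc (1 : ℝ) 2,
            ENNReal.ofReal (Real.exp (-u)) * ENNReal.ofReal (min 1 ‖u • x‖) := by
          apply lintegral_mono_ae
          filter_upwards [ae_restrict_mem measurableSet_Ioc] with u hu
          rw [← ENNReal.ofReal_mul (Real.exp_pos _).le,
            ← ENNReal.ofReal_mul (Real.exp_pos _).le]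
          apply ENNReal.ofReal_le_ofReal
          rw [norm_smul, Real.norm_eq_abs, abs_of_pos (lt_trans one_pos hu.1)]
          exact aux_lo hu.1.le hu.2 (norm_nonneg x)
      _ ≤ _ := lintegral_mono_set hsub
  rw [h1, h2]
  constructor
  · intro h
    by_contra hI
    rw [not_lt, top_le_iff] at hI
    have hle : ENNReal.ofReal (Real.exp (-2)) * ∫⁻ x, ENNReal.ofReal (min 1 ‖x‖) ∂ν
        ≤ ∫⁻ x : E, (∫⁻ u in Ioi (0 : ℝ),
            ENNReal.ofReal (Real.exp (-u)) * ENNReal.ofReal (min 1 ‖u • x‖)) ∂ν := by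
      rw [← lintegral_const_mul _ hfm]
      exact lintegral_mono hJlo
    rw [hI, ENNReal.mul_top (ENNReal.ofReal_pos.2 (Real.exp_pos _)).ne'] at hle
    exact lt_irrefl ⊤ (lt_of_le_of_lt hle h)
  · intro h
    calc ∫⁻ x : E, (∫⁻ u in Ioi (0 : ℝ),
          ENNReal.ofReal (Real.exp (-u)) * ENNReal.ofReal (min 1 ‖u • x‖)) ∂ν
        ≤ ∫⁻ x, C * ENNReal.ofReal (min 1 ‖x‖) ∂ν := lintegral_mono hJup
      _ = C * ∫⁻ x, ENNReal.ofReal (min 1 ‖x‖) ∂ν := lintegral_const_mul _ hfm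
      _ < ⊤ := ENNReal.mul_lt_top hCfin h
end
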